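/- Let (X_n)_{n≥0} be a transient, weakly symmetric, suffix-irreducible random walk on a regular language over a finite alphabet 𝒜, let R > 1 be such that G(w₁, w₂ | R) < ∞ for all w₁, w₂ ∈ ℒ, and fix ϱ ∈ [1, R). Then there exist constants D₁, D₂ > 0 such that for all m, n ∈ ℕ₀ and every word w ∈ ℒ with P[X_n = w] > 0, the m-step transition probability satisfies p^{(m)}(o, w) ≤ D₁·D₂ⁿ·ϱ^{−m}. -/

import Mathlib

open MeasureTheory Filter Topology
open scoped ENNReal Classical

/-- A random walk on a regular language over the finite alphabet `A`:
a Markov chain on finite words whose one-step transitions replace at most the last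
two letters of the current word by a (nonempty, from long words) word of length at
most three, with probabilities `p` depending only on the last two letters of the
current word and on the replacing word. -/
structure RLRW (A : Type) [Fintype A] [DecidableEq A] where
  /-- the local transition probabilities -/
  p : List A → List A → ℝ
  /-- the full one-step transition probabilities between words -/
  step : List A → List A → ℝ
  step_nonneg : ∀ u v, 0 ≤ step u v
  step_hasSum : ∀ u, HasSum (step u) 1
  /-- from a word of length `≥ 2`, the last two letters are replaced by a word of
  length `1`, `2` or `3`, with probability depending only on these data -/
  step_long : ∀ (w x y : List A), x.length = 2 → 1 ≤ y.length → y.length ≤ 3 →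
    step (w ++ x) (w ++ y) = p x y
  /-- transitions from words of length `≤ 1` -/
  step_short : ∀ (x y : List A), x.length ≤ 1 → y.length ≤ x.length + 1 → step x y = p x y
  /-- no other transition is possible -/
  step_support : ∀ u v, 0 < step u v →
    ∃ w x y : List A, u = w ++ x ∧ v = w ++ y ∧ x.length = min u.length 2 ∧
      y.length ≤ x.length + 1 ∧ x.length ≤ y.length + 1

namespace RLRW

variable {A : Type} [Fintype A] [DecidableEq A]

/-- `n`-step transition probabilities `p⁽ⁿ⁾(u,v)`. -/
noncomputable def pstep (M : RLRW A) : ℕ → List A → List A → ℝ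
  | 0, u, v => if u = v then 1 else 0
  | (n + 1), u, v => ∑' w : List A, M.pstep n u w * M.step w v

/-- `n`-step transition probabilities where all the words visited at times `1,…,n`
are required to lie in the set `S`. -/
noncomputable def pstepIn (M : RLRW A) (S : Set (List A)) : ℕ → List A → List A → ℝ
  | 0, u, v => if u = v then 1 else 0
  | (n + 1), u, v => if v ∈ S then ∑' w : List A, M.pstepIn S n u w * M.step w v else 0

/-- The set `ℒ` of words accessible from the empty word. -/
def Lang (M : RLRW A) : Set (List A) := {w | ∃ n, 0 < M.pstep n [] w}

/-- Weak symmetry of the random walk. -/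
def WeaklySymmetric (M : RLRW A) : Prop := ∀ u v, 0 < M.step u v → 0 < M.step v u

/-- Suffix-irreducibility of the random walk. -/
def SuffixIrreducible (M : RLRW A) : Prop :=
  ∀ (w₀ : List A) (a₀ b₀ : A), w₀ ++ [a₀, b₀] ∈ M.Lang → ∀ a b : A,
    ∃ (n : ℕ) (w₁ : List A),
      0 < M.pstepIn {v | (w₀ ++ [a₀, b₀]).length ≤ v.length} n (w₀ ++ [a₀, b₀])
          (w₀ ++ w₁ ++ [a, b])

/-- Transience of the random walk restricted to `ℒ` (finiteness of the Green function). -/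
def Transient (M : RLRW A) : Prop := ∀ w ∈ M.Lang, Summable fun n => M.pstep n w w

/-- Recurrence of the random walk restricted to `ℒ`. -/
def Recurrent (M : RLRW A) : Prop := ∀ w ∈ M.Lang, ¬ Summable fun n => M.pstep n w w

/-- The entropy sequence `E[-log π_n(X_n)] = ∑_w π_n(w)·(-log π_n(w))`, where `π_n`
is the distribution of `X_n`. -/
noncomputable def entropySeq (M : RLRW A) (n : ℕ) : ℝ :=
  ∑' w : List A, M.pstep n [] w * (-Real.log (M.pstep n [] w))

/-- `X` is (a version of) the random walk given by `M`, started at the empty word,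
on the probability space `(Ω, P)`: its finite-dimensional distributions are the ones
prescribed by the one-step transition probabilities. -/
def IsRandomWalk (M : RLRW A) {Ω : Type} [MeasurableSpace Ω] (P : Measure Ω)
    (X : ℕ → Ω → List A) : Prop :=
  ∀ (n : ℕ) (w : ℕ → List A),
    P {ω | ∀ i ≤ n, X i ω = w i} =
      ENNReal.ofReal ((if w 0 = ([] : List A) then 1 else 0) *
        ∏ i ∈ Finset.range n, M.step (w i) (w (i + 1)))

/-- The word formed by the last two letters of `w`. -/
def lastTwo (w : List A) : List A := w.drop (w.length - 2)

/-- The cone rooted at `w₀`: all words `w` of length `≥ |w₀|` reachable from `w₀` by a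
path through words of length `≥ |w₀|`. -/
def Cone (M : RLRW A) (w₀ : List A) : Set (List A) :=
  {w | ∃ (n : ℕ) (f : ℕ → List A), f 0 = w₀ ∧ f n = w ∧
    (∀ i ≤ n, w₀.length ≤ (f i).length) ∧ ∀ i < n, 0 < M.step (f i) (f (i + 1))}

/-- The boundary `∂C(w)` of a cone. -/
def coneBoundary (M : RLRW A) (w : List A) : Set (List A) :=
  {w' | w' ∈ M.Cone w ∧ w'.length = w.length ∧ ∃ w'', w'' ∉ M.Cone w ∧ 0 < M.step w' w''}

/-- The random walk is expanding if every cone rooted at a word of `ℒ` contains two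
disjoint proper subcones rooted at words of `ℒ`. -/
def Expanding (M : RLRW A) : Prop :=
  ∀ w₀ ∈ M.Lang, 2 ≤ w₀.length →
    ∃ w₁ w₂ : List A, w₁ ∈ M.Lang ∧ w₂ ∈ M.Lang ∧ w₁ ∈ M.Cone w₀ ∧ w₂ ∈ M.Cone w₀ ∧
      M.Cone w₁ ⊂ M.Cone w₀ ∧ M.Cone w₂ ⊂ M.Cone w₀ ∧ M.Cone w₁ ∩ M.Cone w₂ = ∅

/-- Probability of a first visit to `v` at time exactly `n` (for `n ≥ 1`),
starting from `u`. -/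
noncomputable def firstVisit (M : RLRW A) : ℕ → List A → List A → ℝ
  | 0, _, _ => 0
  | 1, u, v => M.step u v
  | (n + 2), u, v => ∑' w : List A, if w = v then 0 else M.step u w * M.firstVisit (n + 1) w v

/-- The hitting probability `P[∃ n ≥ 0 : X_n = v | X_0 = u]`. -/
noncomputable def hitProb (M : RLRW A) (u v : List A) : ℝ :=
  if u = v then 1 else ∑' n : ℕ, M.firstVisit n u v

/-- The Greenian distance `d_Green(u,v) = - log P[∃ n ≥ 0 : X_n = v | X_0 = u]`. -/
noncomputable def dGreen (M : RLRW A) (u v : List A) : ℝ := -Real.log (M.hitProb u v)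

/-- The last-visit generating function `L(o,w|1)`. -/
noncomputable def lastVisitGF (M : RLRW A) (w : List A) : ℝ :=
  ∑' n : ℕ, M.pstepIn {v | v ≠ ([] : List A)} n [] w

end RLRW

section Aux

namespace RLRW

variable {A : Type} [Fintype A] [DecidableEq A]

lemma step_le_one (M : RLRW A) (u v : List A) : M.step u v ≤ 1 :=
  le_hasSum (M.step_hasSum u) v (fun w _ => M.step_nonneg u w)

lemma pstep_zero (M : RLRW A) (u v : List A) :
    M.pstep 0 u v = if u = v then 1 else 0 := rfl

lemma pstep_succ (M : RLRW A) (n : ℕ) (u v : List A) :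
    M.pstep (n + 1) u v = ∑' w : List A, M.pstep n u w * M.step w v := rfl

lemma pstep_nonneg (M : RLRW A) : ∀ (n : ℕ) (u v : List A), 0 ≤ M.pstep n u v := by
  intro n
  induction n with
  | zero => intro u v; rw [pstep_zero]; positivity
  | succ n ih =>
    intro u v
    rw [pstep_succ]
    exact tsum_nonneg fun w => mul_nonneg (ih u w) (M.step_nonneg w v)

lemma pstep_hasSum (M : RLRW A) : ∀ (n : ℕ) (u : List A), HasSum (M.pstep n u) 1 := by
  intro n
  induction n with
  | zero =>
    intro u
    have : (fun v => if u = v then (1:ℝ) else 0) = fun v => if v = u then (1:ℝ) else 0 := by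
      funext v; simp [eq_comm]
    show HasSum (fun v => if u = v then (1:ℝ) else 0) 1
    rw [this]
    exact hasSum_ite_eq u 1
  | succ n ih =>
    intro u
    have hf := ih u
    set g : List A × List A → ℝ := fun q => M.pstep n u q.1 * M.step q.1 q.2 with hg_def
    have hg0 : ∀ q, 0 ≤ g q := fun q =>
      mul_nonneg (M.pstep_nonneg n u q.1) (M.step_nonneg q.1 q.2)
    have hrow : ∀ w, Summable fun v => g (w, v) := by
      intro w
      show Summable fun v => M.pstep n u w * M.step w v
      exact (M.step_hasSum w).summable.mul_left _
    have hrowsum : ∀ w, (∑' v, g (w, v)) = M.pstep n u w := by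
      intro w
      show (∑' v, M.pstep n u w * M.step w v) = M.pstep n u w
      rw [tsum_mul_left, (M.step_hasSum w).tsum_eq, mul_one]
    have hsumrow : Summable fun w => ∑' v, g (w, v) := by
      simp only [hrowsum]; exact hf.summable
    have hg : Summable g := (summable_prod_of_nonneg hg0).mpr ⟨hrow, hsumrow⟩
    have htot : ∑' q, g q = 1 := by
      rw [Summable.tsum_prod' hg hrow]
      simp only [hrowsum]
      exact hf.tsum_eq
    have hswap : Summable fun q : List A × List A => g q.swap := hg.prod_symm
    have hcol := (summable_prod_of_nonneg (fun q => hg0 q.swap)).mp hswap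
    have htot' : (∑' v, ∑' w, g (w, v)) = 1 := by
      have e1 : ∑' (q : List A × List A), g q.swap = ∑' (b) (c), g (b, c).swap :=
        Summable.tsum_prod' hswap hcol.1
      simp only [Prod.swap_prod_mk] at e1
      rw [← e1, ← htot]
      exact ((Equiv.prodComm (List A) (List A)).tsum_eq g)
    show HasSum (fun v => ∑' w, M.pstep n u w * M.step w v) 1
    exact (hcol.2).hasSum_iff.mpr htot'

lemma pstep_le_one (M : RLRW A) (n : ℕ) (u v : List A) : M.pstep n u v ≤ 1 :=
  le_hasSum (M.pstep_hasSum n u) v (fun w _ => M.pstep_nonneg n u w)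

lemma summable_pstep_mul_step (M : RLRW A) (n : ℕ) (u v : List A) :
    Summable fun w => M.pstep n u w * M.step w v := by
  apply (M.pstep_hasSum n u).summable.of_nonneg_of_le
    (fun w => mul_nonneg (M.pstep_nonneg n u w) (M.step_nonneg w v))
  intro w
  exact mul_le_of_le_one_right (M.pstep_nonneg n u w) (M.step_le_one w v)

lemma mul_pstep_le (M : RLRW A) (m : ℕ) :
    ∀ (k : ℕ) (u w v : List A), M.pstep m u w * M.pstep k w v ≤ M.pstep (m + k) u v := by
  intro k
  induction k with
  | zero =>
    intro u w v
    rw [pstep_zero]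
    by_cases h : w = v
    · subst h; simpa using le_refl (M.pstep m u w)
    · simp [h, M.pstep_nonneg]
  | succ k ih =>
    intro u w v
    have h1 : M.pstep m u w * M.pstep (k+1) w v
        = ∑' x, M.pstep m u w * (M.pstep k w x * M.step x v) := by
      rw [pstep_succ, tsum_mul_left]
    rw [h1, show m + (k+1) = (m+k) + 1 by ring, pstep_succ]
    apply Summable.tsum_le_tsum _ ((M.summable_pstep_mul_step k w v).mul_left _)
      (M.summable_pstep_mul_step (m+k) u v)
    intro x
    rw [← mul_assoc]
    exact mul_le_mul_of_nonneg_right (ih u w x) (M.step_nonneg x v)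

lemma pstep_one (M : RLRW A) (u v : List A) : M.pstep 1 u v = M.step u v := by
  rw [pstep_succ]
  rw [tsum_eq_single u]
  · simp [pstep_zero]
  · intro w hw
    simp [pstep_zero, (Ne.symm hw)]

lemma exists_pos_of_tsum_pos {f : List A → ℝ} (hf : ∀ x, 0 ≤ f x)
    (h : 0 < ∑' x, f x) : ∃ x, 0 < f x := by
  by_contra hc
  push_neg at hc
  have : ∀ x, f x = 0 := fun x => le_antisymm (hc x) (hf x)
  simp [this] at h

/-- finite set of lists of length at most 3 -/
def shortLists (A : Type) [Fintype A] [DecidableEq A] : Finset (List A) :=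
  {([] : List A)} ∪ Finset.univ.image (fun a : A => [a])
    ∪ Finset.univ.image (fun q : A × A => [q.1, q.2])
    ∪ Finset.univ.image (fun q : A × A × A => [q.1, q.2.1, q.2.2])

lemma mem_shortLists : ∀ {l : List A}, l.length ≤ 3 → l ∈ shortLists A := by
  intro l hl
  match l with
  | [] => simp [shortLists]
  | [a] =>
    simp only [shortLists, Finset.mem_union, Finset.mem_image, Finset.mem_singleton]
    exact Or.inl (Or.inl (Or.inr ⟨a, Finset.mem_univ a, rfl⟩))
  | [a, b] =>
    simp only [shortLists, Finset.mem_union, Finset.mem_image, Finset.mem_singleton]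
    exact Or.inl (Or.inr ⟨(a, b), Finset.mem_univ _, rfl⟩)
  | [a, b, c] =>
    simp only [shortLists, Finset.mem_union, Finset.mem_image, Finset.mem_singleton]
    exact Or.inr ⟨(a, b, c), Finset.mem_univ _, rfl⟩
  | a :: b :: c :: d :: t => simp at hl; omega

/-- finite set of all positive one-step transition values -/
noncomputable def posVals (M : RLRW A) : Finset ℝ :=
  ((shortLists A ×ˢ shortLists A).image fun q => M.p q.1 q.2).filter fun r => 0 < r

lemma step_mem_posVals (M : RLRW A) {u v : List A} (h : 0 < M.step u v) :
    M.step u v ∈ M.posVals := by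
  obtain ⟨w, x, y, hu, hv, hx, hy1, hy2⟩ := M.step_support u v h
  have hkey : M.step u v = M.p x y ∧ x.length ≤ 3 ∧ y.length ≤ 3 := by
    rcases le_or_gt 2 u.length with h2 | h2
    · have hx2 : x.length = 2 := by omega
      have : M.step u v = M.p x y := by
        rw [hu, hv]
        exact M.step_long w x y hx2 (by omega) (by omega)
      exact ⟨this, by omega, by omega⟩
    · have hx2 : x.length = u.length := by omega
      have hw : w = [] := by
        have := congrArg List.length hu
        simp at this
        have : w.length = 0 := by omega
        exact List.length_eq_zero_iff.mp this
      subst hw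
      have hux : u = x := by simpa using hu
      have hvy : v = y := by simpa using hv
      have : M.step u v = M.p x y := by
        rw [hux, hvy]; exact M.step_short x y (by omega) (by omega)
      exact ⟨this, by omega, by omega⟩
    
  obtain ⟨heq, hx3, hy3⟩ := hkey
  rw [heq]
  apply Finset.mem_filter.mpr
  constructor
  · exact Finset.mem_image.mpr ⟨(x, y),
      Finset.mem_product.mpr ⟨mem_shortLists hx3, mem_shortLists hy3⟩, rfl⟩
  · rw [← heq]; exact h

lemma pstep_rev (M : RLRW A) (hWS : M.WeaklySymmetric) {ε : ℝ} (hε0 : 0 ≤ ε)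
    (hε : ∀ u v, 0 < M.step u v → ε ≤ M.step u v) :
    ∀ (n : ℕ) (u v : List A), 0 < M.pstep n u v → ε ^ n ≤ M.pstep n v u := by
  intro n
  induction n with
  | zero =>
    intro u v h
    rw [pstep_zero] at h ⊢
    by_cases huv : u = v
    · simp [huv] at h ⊢
    · simp [huv] at h
  | succ n ih =>
    intro u v h
    rw [pstep_succ] at h
    obtain ⟨x, hx⟩ := exists_pos_of_tsum_pos
      (fun w => mul_nonneg (M.pstep_nonneg n u w) (M.step_nonneg w v)) h
    have h1 : 0 < M.pstep n u x := by
      rcases mul_pos_iff.mp hx with ⟨h1, _⟩ | ⟨h1, _⟩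
      · exact h1
      · exact absurd (M.pstep_nonneg n u x) (not_le.mpr h1)
    have h2 : 0 < M.step x v := by
      rcases mul_pos_iff.mp hx with ⟨_, h2⟩ | ⟨h2, _⟩
      · exact h2
      · exact absurd (M.pstep_nonneg n u x) (not_le.mpr h2)
    have h3 : 0 < M.step v x := hWS x v h2
    have h4 : ε ≤ M.pstep 1 v x := by rw [M.pstep_one]; exact hε v x h3
    have h5 : ε ^ n ≤ M.pstep n x u := ih u x h1
    calc ε ^ (n + 1) = ε * ε ^ n := by ring
    _ ≤ M.pstep 1 v x * M.pstep n x u := by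
        apply mul_le_mul h4 h5 (pow_nonneg hε0 n) (M.pstep_nonneg 1 v x)
    _ ≤ M.pstep (1 + n) v u := M.mul_pstep_le 1 n v x u
    _ = M.pstep (n + 1) v u := by rw [add_comm]

end RLRW

end Aux


/-- For a transient, weakly symmetric, suffix-irreducible random walk
on a regular language, if `R > 1` is such that all Green functions converge at `R` and
`ϱ ∈ [1, R)`, then there are constants `D₁, D₂ > 0` such that for all `m, n ∈ ℕ₀` and
every word `w` with `P[X_n = w] > 0` one has `p⁽ᵐ⁾(o,w) ≤ D₁·D₂ⁿ·ϱ^{-m}`. -/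
theorem pstep_upper_bound
    {A : Type} [Fintype A] [DecidableEq A] (M : RLRW A)
    (hT : M.Transient) (hWS : M.WeaklySymmetric) (hSI : M.SuffixIrreducible)
    (R : ℝ) (hR : 1 < R)
    (hG : ∀ w₁ ∈ M.Lang, ∀ w₂ ∈ M.Lang, Summable (fun n : ℕ => M.pstep n w₁ w₂ * R ^ n))
    (ϱ : ℝ) (hϱ₁ : 1 ≤ ϱ) (hϱR : ϱ < R) :
    ∃ D₁ D₂ : ℝ, 0 < D₁ ∧ 0 < D₂ ∧
      ∀ (m n : ℕ) (w : List A), 0 < M.pstep n [] w →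
        M.pstep m [] w ≤ D₁ * D₂ ^ n / ϱ ^ m := by
  classical
  have hex : ∃ v, 0 < M.step [] v := by
    by_contra hc
    push_neg at hc
    have h0 : ∀ v, M.step [] v = 0 := fun v => le_antisymm (hc v) (M.step_nonneg [] v)
    have h1 := (M.step_hasSum []).tsum_eq
    simp [h0, tsum_zero] at h1
  obtain ⟨v₀, hv₀⟩ := hex
  have hne : (M.posVals).Nonempty := ⟨M.step [] v₀, M.step_mem_posVals hv₀⟩
  set ε := M.posVals.min' hne with hε_def
  have hεpos : 0 < ε := (Finset.mem_filter.mp (M.posVals.min'_mem hne)).2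
  have hεle : ∀ u v, 0 < M.step u v → ε ≤ M.step u v := fun u v h =>
    Finset.min'_le _ _ (M.step_mem_posVals h)
  have hnil : ([] : List A) ∈ M.Lang := ⟨0, by rw [M.pstep_zero]; simp⟩
  have hsum : Summable (fun k : ℕ => M.pstep k [] [] * R ^ k) := hG [] hnil [] hnil
  have hRpos : 0 < R := lt_trans one_pos hR
  set G := ∑' k : ℕ, M.pstep k [] [] * R ^ k with hG_def
  have hterm : ∀ k, M.pstep k [] [] * R ^ k ≤ G := fun k =>
    Summable.le_tsum hsum k (fun j _ => mul_nonneg (M.pstep_nonneg j [] []) (by positivity))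
  have hG1 : (1 : ℝ) ≤ G := by
    have h0 := hterm 0
    rw [M.pstep_zero] at h0
    simpa using h0
  have hϱpos : 0 < ϱ := lt_of_lt_of_le one_pos hϱ₁
  refine ⟨G, 1 / (R * ε), by linarith, by positivity, ?_⟩
  intro m n w hw
  have h1 : ε ^ n ≤ M.pstep n w [] := M.pstep_rev hWS hεpos.le hεle n [] w hw
  have h2 : M.pstep m [] w * M.pstep n w [] ≤ M.pstep (m + n) [] [] :=
    M.mul_pstep_le m n [] w []
  have h3 : M.pstep (m + n) [] [] * R ^ (m + n) ≤ G := hterm (m + n)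
  have hp0 : 0 ≤ M.pstep m [] w := M.pstep_nonneg m [] w
  have key : M.pstep m [] w * (ε ^ n * R ^ (m + n)) ≤ G := by
    calc M.pstep m [] w * (ε ^ n * R ^ (m + n))
        ≤ M.pstep m [] w * (M.pstep n w [] * R ^ (m + n)) :=
          mul_le_mul_of_nonneg_left
            (mul_le_mul_of_nonneg_right h1 (by positivity)) hp0
      _ = (M.pstep m [] w * M.pstep n w []) * R ^ (m + n) := by ring
      _ ≤ M.pstep (m + n) [] [] * R ^ (m + n) :=
          mul_le_mul_of_nonneg_right h2 (by positivity)
      _ ≤ G := h3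
  rw [le_div_iff₀ (by positivity : (0:ℝ) < ϱ ^ m)]
  have hD2 : (1 / (R * ε)) ^ n = ((R ^ n) * (ε ^ n))⁻¹ := by
    rw [one_div, inv_pow, mul_pow]
  rw [hD2, ← div_eq_mul_inv, le_div_iff₀ (by positivity : (0:ℝ) < R ^ n * ε ^ n)]
  calc M.pstep m [] w * ϱ ^ m * (R ^ n * ε ^ n)
      ≤ M.pstep m [] w * R ^ m * (R ^ n * ε ^ n) :=
        mul_le_mul_of_nonneg_right
          (mul_le_mul_of_nonneg_left (pow_le_pow_left₀ (by linarith) hϱR.le m) hp0)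
          (by positivity)
    _ = M.pstep m [] w * (ε ^ n * R ^ (m + n)) := by rw [pow_add]; ring
    _ ≤ G := key
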